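/- Let G be a Lie group (or a locally compact group with left Haar measure ν and a left-invariant metric d), D a countable dense subset of G, and 𝔹 the collection of closed balls with center in D and positive rational radius. Let U be a nonempty open subset of G and μ a Borel probability measure on U. If μ(g·B) = μ(B) for every B ∈ 𝔹 and g ∈ D such that both B and g·B are contained in U, then ν(U) < ∞ and μ equals the normalized restriction of the Haar measure: μ = ν|_U / ν(U). -/

import Mathlib

open MeasureTheory

namespace Stmt1Aux

variable {G : Type*} [Group G] [MetricSpace G]

lemma cball_image (hleftinv : ∀ g x y : G, dist (g * x) (g * y) = dist x y)
    (g c : G) (q : ℝ) :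
    (fun x => g * x) '' Metric.closedBall c q = Metric.closedBall (g * c) q := by
  ext w
  constructor
  · rintro ⟨z, hz, rfl⟩
    simpa [Metric.mem_closedBall, hleftinv g z c] using hz
  · intro hw
    refine ⟨g⁻¹ * w, ?_, by simp⟩
    have h := hleftinv g⁻¹ w (g * c)
    simp only [inv_mul_cancel_left] at h
    simpa [Metric.mem_closedBall, h] using hw

lemma cball_preimage (hleftinv : ∀ g x y : G, dist (g * x) (g * y) = dist x y)
    (x : G) (q : ℝ) :
    Metric.closedBall x q = (fun z => x⁻¹ * z) ⁻¹' Metric.closedBall (1 : G) q := by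
  ext z
  have h := hleftinv x⁻¹ z x
  simp only [inv_mul_cancel] at h
  simp [Metric.mem_closedBall, ← h]

omit [Group G] in
lemma innerSet_isClosed (O : Set G) (s : ℝ) :
    IsClosed {y : G | Metric.ball y s ⊆ O} := by
  rw [← isOpen_compl_iff]
  have h : {y : G | Metric.ball y s ⊆ O}ᶜ = ⋃ z ∈ Oᶜ, Metric.ball z s := by
    ext y
    simp only [Set.mem_compl_iff, Set.mem_setOf_eq, Set.subset_def, not_forall,
      Set.mem_iUnion, Metric.mem_ball]
    constructor
    · rintro ⟨z, hz1, hz2⟩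
      exact ⟨z, hz2, by rwa [dist_comm]⟩
    · rintro ⟨z, hz2, hz1⟩
      exact ⟨z, by rwa [dist_comm], hz2⟩
  rw [h]
  exact isOpen_biUnion fun _ _ => Metric.isOpen_ball

omit [Group G] in
lemma innerSet_mono (O : Set G) {s t : ℝ} (h : s ≤ t) :
    {y : G | Metric.ball y t ⊆ O} ⊆ {y : G | Metric.ball y s ⊆ O} :=
  fun _ hy => (Metric.ball_subset_ball h).trans hy

omit [Group G] in
lemma innerSet_subset {O : Set G} {s : ℝ} (hs : 0 < s) :
    {y : G | Metric.ball y s ⊆ O} ⊆ O :=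
  fun _ hy => hy (Metric.mem_ball_self hs)

omit [Group G] in
lemma cball_subset_of_innerSet {O : Set G} {s b : ℝ} {y : G}
    (hy : y ∈ {y : G | Metric.ball y s ⊆ O}) (hb : b < s) :
    Metric.closedBall y b ⊆ O :=
  (Metric.closedBall_subset_ball hb).trans hy

omit [Group G] in
lemma cball_subset_innerSet {O : Set G} {s a : ℝ} {x : G}
    (hx : x ∈ {y : G | Metric.ball y (s + a) ⊆ O}) :
    Metric.closedBall x a ⊆ {y : G | Metric.ball y s ⊆ O} := by
  intro z hz w hw
  apply hx
  rw [Metric.mem_ball] at hw ⊢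
  calc dist w x ≤ dist w z + dist z x := dist_triangle _ _ _
    _ < s + a := add_lt_add_of_lt_of_le hw hz

omit [Group G] in
lemma innerSet_iUnion {O : Set G} (hO : IsOpen O) :
    ⋃ k : ℕ, {y : G | Metric.ball y (1 / (k + 1)) ⊆ O} = O := by
  apply Set.Subset.antisymm
  · exact Set.iUnion_subset fun k => innerSet_subset (by positivity)
  · intro x hx
    obtain ⟨ε, hε, hball⟩ := Metric.isOpen_iff.mp hO x hx
    obtain ⟨k, hk⟩ := exists_nat_one_div_lt hε
    exact Set.mem_iUnion.mpr ⟨k, (Metric.ball_subset_ball hk.le).trans hball⟩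

variable [MeasurableSpace G] [BorelSpace G] [IsTopologicalGroup G]

lemma key (hleftinv : ∀ g x y : G, dist (g * x) (g * y) = dist x y)
    (D : Set G) (hDdense : Dense D)
    (U : Set G)
    (μ : Measure G)
    (hμinv : ∀ c ∈ D, ∀ q : ℚ, 0 < q → ∀ g ∈ D,
      Metric.closedBall c (q : ℝ) ⊆ U →
      (fun x => g * x) '' Metric.closedBall c (q : ℝ) ⊆ U →
      μ ((fun x => g * x) '' Metric.closedBall c (q : ℝ)) = μ (Metric.closedBall c (q : ℝ)))
    (x y : G) (a b : ℝ) (ha : 0 ≤ a) (hab : a < b)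
    (hx : Metric.closedBall x b ⊆ U) (hy : Metric.closedBall y b ⊆ U) :
    μ (Metric.closedBall x a) ≤ μ (Metric.closedBall y b) := by
  obtain ⟨r, hr1, hr2⟩ := exists_rat_btwn (show a < (a + b) / 2 by linarith)
  have hrpos : (0 : ℚ) < r := by exact_mod_cast ha.trans_lt hr1
  have hrx : (0 : ℝ) < (r : ℝ) - a := by linarith
  obtain ⟨c, hcball, hcD⟩ := Metric.dense_iff.mp hDdense x ((r : ℝ) - a) hrx
  rw [Metric.mem_ball] at hcball
  have hbr : (0 : ℝ) < b - (r : ℝ) := by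
    have : (r : ℝ) < (a + b) / 2 := by exact_mod_cast hr2
    linarith
  obtain ⟨g, hgD, hgS⟩ := hDdense.exists_mem_open
    (show IsOpen {h : G | h * c ∈ Metric.ball y (b - (r : ℝ))} from
      (Metric.isOpen_ball).preimage (continuous_mul_right c))
    ⟨y * c⁻¹, by simp only [Set.mem_setOf_eq, inv_mul_cancel_right, Metric.mem_ball,
      dist_self]; linarith⟩
  have hgc : dist (g * c) y < b - (r : ℝ) := by
    simpa [Metric.mem_ball] using hgS
  have h1 : Metric.closedBall c (r : ℝ) ⊆ Metric.closedBall x b := by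
    intro z hz
    rw [Metric.mem_closedBall] at hz ⊢
    calc dist z x ≤ dist z c + dist c x := dist_triangle _ _ _
      _ ≤ (r : ℝ) + ((r : ℝ) - a) := add_le_add hz hcball.le
      _ ≤ b := by
          have : (r : ℝ) < (a + b) / 2 := by exact_mod_cast hr2
          linarith
  have h2 : Metric.closedBall (g * c) (r : ℝ) ⊆ Metric.closedBall y b := by
    intro z hz
    rw [Metric.mem_closedBall] at hz ⊢
    calc dist z y ≤ dist z (g * c) + dist (g * c) y := dist_triangle _ _ _
      _ ≤ (r : ℝ) + (b - (r : ℝ)) := add_le_add hz hgc.le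
      _ = b := by ring
  have h3 : Metric.closedBall x a ⊆ Metric.closedBall c (r : ℝ) := by
    intro z hz
    rw [Metric.mem_closedBall] at hz ⊢
    calc dist z c ≤ dist z x + dist x c := dist_triangle _ _ _
      _ ≤ a + ((r : ℝ) - a) := add_le_add hz (by rw [dist_comm]; exact hcball.le)
      _ = (r : ℝ) := by ring
  have himg := cball_image hleftinv g c (r : ℝ)
  have hinv := hμinv c hcD r hrpos g hgD (h1.trans hx)
    (by rw [himg]; exact h2.trans hy)
  rw [himg] at hinv
  calc μ (Metric.closedBall x a) ≤ μ (Metric.closedBall c (r : ℝ)) := measure_mono h3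
    _ = μ (Metric.closedBall (g * c) (r : ℝ)) := hinv.symm
    _ ≤ μ (Metric.closedBall y b) := measure_mono h2

omit [Group G] [IsTopologicalGroup G] in
lemma fub [SecondCountableTopology G]
    (μ ν : Measure G) [SFinite μ] [SFinite ν]
    (W : Set G) (hW : MeasurableSet W) (r : ℝ) :
    ∫⁻ y in W, μ (Metric.closedBall y r) ∂ν = ∫⁻ x, ν (W ∩ Metric.closedBall x r) ∂μ := by
  set E : Set (G × G) := {p : G × G | p.2 ∈ W ∧ dist p.1 p.2 ≤ r} with hE
  have hEmeas : MeasurableSet E := by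
    apply MeasurableSet.inter
    · exact measurable_snd hW
    · exact isClosed_le (continuous_dist.comp (continuous_fst.prodMk continuous_snd))
        continuous_const |>.measurableSet
  have hswap := lintegral_lintegral_swap (μ := μ) (ν := ν)
    (f := fun x y => E.indicator (fun _ => (1 : ENNReal)) (x, y))
    ((measurable_one.indicator hEmeas).aemeasurable)
  have h1 : ∀ x : G, ∫⁻ y, E.indicator (fun _ => (1 : ENNReal)) (x, y) ∂ν
      = ν (W ∩ Metric.closedBall x r) := by
    intro x
    have h : ∀ y : G, E.indicator (fun _ => (1 : ENNReal)) (x, y)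
        = (W ∩ Metric.closedBall x r).indicator (fun _ => (1 : ENNReal)) y := by
      intro y
      by_cases hy : y ∈ W ∩ Metric.closedBall x r
      · rw [Set.indicator_of_mem hy, Set.indicator_of_mem]
        exact ⟨hy.1, by simpa [Metric.mem_closedBall, dist_comm] using hy.2⟩
      · rw [Set.indicator_of_notMem hy, Set.indicator_of_notMem]
        intro hc
        exact hy ⟨hc.1, by simpa [Metric.mem_closedBall, dist_comm] using hc.2⟩
    simp_rw [h]
    rw [lintegral_indicator (hW.inter Metric.isClosed_closedBall.measurableSet)]
    simp
  have h2 : ∀ y : G, ∫⁻ x, E.indicator (fun _ => (1 : ENNReal)) (x, y) ∂μ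
      = W.indicator (fun y => μ (Metric.closedBall y r)) y := by
    intro y
    by_cases hy : y ∈ W
    · have h : ∀ x : G, E.indicator (fun _ => (1 : ENNReal)) (x, y)
          = (Metric.closedBall y r).indicator (fun _ => (1 : ENNReal)) x := by
        intro x
        by_cases hx : x ∈ Metric.closedBall y r
        · rw [Set.indicator_of_mem hx, Set.indicator_of_mem]
          exact ⟨hy, hx⟩
        · rw [Set.indicator_of_notMem hx, Set.indicator_of_notMem]
          exact fun hc => hx hc.2
      simp_rw [h]
      rw [lintegral_indicator Metric.isClosed_closedBall.measurableSet]
      simp [Set.indicator_of_mem hy]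
    · have h : ∀ x : G, E.indicator (fun _ => (1 : ENNReal)) (x, y) = 0 := by
        intro x
        exact Set.indicator_of_notMem (fun hc => hy hc.1) _
      simp_rw [h]
      simp [Set.indicator_of_notMem hy]
  calc ∫⁻ y in W, μ (Metric.closedBall y r) ∂ν
      = ∫⁻ y, W.indicator (fun y => μ (Metric.closedBall y r)) y ∂ν := by
        rw [lintegral_indicator hW]
    _ = ∫⁻ y, ∫⁻ x, E.indicator (fun _ => (1 : ENNReal)) (x, y) ∂μ ∂ν := by
        simp_rw [h2]
    _ = ∫⁻ x, ∫⁻ y, E.indicator (fun _ => (1 : ENNReal)) (x, y) ∂ν ∂μ := hswap.symm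
    _ = ∫⁻ x, ν (W ∩ Metric.closedBall x r) ∂μ := by simp_rw [h1]

end Stmt1Aux

open Stmt1Aux Filter Topology

theorem stmt1 {G : Type*} [Group G] [MetricSpace G] [MeasurableSpace G] [BorelSpace G]
    [IsTopologicalGroup G] [LocallyCompactSpace G]
    (hleftinv : ∀ g x y : G, dist (g * x) (g * y) = dist x y)
    (ν : Measure G) [ν.IsHaarMeasure]
    (D : Set G) (hDcount : D.Countable) (hDdense : Dense D)
    (U : Set G) (hUopen : IsOpen U) (hUne : U.Nonempty)
    (μ : Measure G) [IsProbabilityMeasure μ] (hμsupp : μ Uᶜ = 0)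
    (hμinv : ∀ c ∈ D, ∀ q : ℚ, 0 < q → ∀ g ∈ D,
      Metric.closedBall c (q : ℝ) ⊆ U →
      (fun x => g * x) '' Metric.closedBall c (q : ℝ) ⊆ U →
      μ ((fun x => g * x) '' Metric.closedBall c (q : ℝ)) = μ (Metric.closedBall c (q : ℝ))) :
    ν U < ⊤ ∧ μ = (ν U)⁻¹ • ν.restrict U := by
  classical
  haveI : TopologicalSpace.SeparableSpace G := ⟨⟨D, hDcount, hDdense⟩⟩
  haveI : SecondCountableTopology G := UniformSpace.secondCountable_of_separable G
  haveI : SigmaFinite ν := by infer_instance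
  -- basic data
  obtain ⟨K, hKc, hKmem⟩ := exists_compact_mem_nhds (1 : G)
  obtain ⟨r₀, hr₀pos, hr₀K⟩ := Metric.mem_nhds_iff.mp hKmem
  obtain ⟨x₀, hx₀⟩ := hUne
  obtain ⟨ε₁, hε₁pos, hε₁⟩ := Metric.isOpen_iff.mp hUopen x₀ hx₀
  set q₀ : ℝ := min (r₀ / 2) (ε₁ / 2) with hq₀def
  have hq₀pos : 0 < q₀ := lt_min (by linarith) (by linarith)
  set c₀ : G := x₀ with hc₀def
  have hc₀U : Metric.closedBall c₀ q₀ ⊆ U :=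
    (Metric.closedBall_subset_ball ((min_le_right _ _).trans_lt (by linarith))).trans hε₁
  have hq₀cpt : IsCompact (Metric.closedBall (1 : G) q₀) :=
    hKc.of_isClosed_subset Metric.isClosed_closedBall
      ((Metric.closedBall_subset_ball ((min_le_left _ _).trans_lt (by linarith))).trans hr₀K)
  have hν_ball : ∀ (x : G) (q : ℝ), ν (Metric.closedBall x q) = ν (Metric.closedBall 1 q) := by
    intro x q
    rw [cball_preimage hleftinv x q]
    exact measure_preimage_mul ν x⁻¹ _
  have hnfin : ∀ q : ℝ, q ≤ q₀ → ν (Metric.closedBall (1 : G) q) ≠ ⊤ := fun q hq =>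
    ((measure_mono (Metric.closedBall_subset_closedBall hq)).trans_lt
      hq₀cpt.measure_lt_top).ne
  have hnpos : ∀ q : ℝ, 0 < q → ν (Metric.closedBall (1 : G) q) ≠ 0 := fun q hq =>
    ((Metric.measure_ball_pos ν 1 hq).trans_le
      (measure_mono Metric.ball_subset_closedBall)).ne'
  have hkey := key hleftinv D hDdense U μ hμinv
  set DS : ℝ → Set G := fun s => {y : G | Metric.ball y s ⊆ U} with hDSdef
  -- (I)
  have hI : ∀ a b t : ℝ, 0 ≤ a → a < b → b < t → b ≤ q₀ →
      μ (Metric.closedBall c₀ a) * ν (DS t) ≤ ν (Metric.closedBall (1 : G) b) := by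
    intro a b t ha hab hbt hbq
    have hWmeas : MeasurableSet (DS t) := (innerSet_isClosed U t).measurableSet
    calc μ (Metric.closedBall c₀ a) * ν (DS t)
        = ∫⁻ _ in DS t, μ (Metric.closedBall c₀ a) ∂ν := (setLIntegral_const _ _).symm
      _ ≤ ∫⁻ y in DS t, μ (Metric.closedBall y b) ∂ν := by
          apply setLIntegral_mono' hWmeas
          intro y hy
          exact hkey c₀ y a b ha hab
            ((Metric.closedBall_subset_closedBall hbq).trans hc₀U)
            (cball_subset_of_innerSet hy hbt)
      _ = ∫⁻ x, ν (DS t ∩ Metric.closedBall x b) ∂μ := fub μ ν (DS t) hWmeas b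
      _ ≤ ∫⁻ _, ν (Metric.closedBall (1 : G) b) ∂μ := by
          apply lintegral_mono
          intro x
          rw [← hν_ball x b]
          exact measure_mono Set.inter_subset_right
      _ = ν (Metric.closedBall (1 : G) b) := by rw [lintegral_const, measure_univ, mul_one]
  -- (III)
  have hIII : ∀ (V : Set G), IsOpen V → ∀ a a' b s : ℝ, 0 < a → a < a' → a < b → b < s →
      b ≤ q₀ →
      ν (Metric.closedBall (1 : G) a) * μ ({x : G | Metric.ball x a' ⊆ V} ∩ DS (s + a))
        ≤ μ (Metric.closedBall c₀ b) * ν (V ∩ DS s) := by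
    intro V hV a a' b s hapos haa' hab hbs hbq
    have hWmeas : MeasurableSet (V ∩ DS s) :=
      hV.measurableSet.inter (innerSet_isClosed U s).measurableSet
    have hXmeas : MeasurableSet ({x : G | Metric.ball x a' ⊆ V} ∩ DS (s + a)) :=
      (innerSet_isClosed V a').measurableSet.inter (innerSet_isClosed U (s + a)).measurableSet
    calc ν (Metric.closedBall (1 : G) a) * μ ({x : G | Metric.ball x a' ⊆ V} ∩ DS (s + a))
        = ∫⁻ _ in {x : G | Metric.ball x a' ⊆ V} ∩ DS (s + a),
            ν (Metric.closedBall (1 : G) a) ∂μ := (setLIntegral_const _ _).symm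
      _ = ∫⁻ x in {x : G | Metric.ball x a' ⊆ V} ∩ DS (s + a),
            ν (V ∩ DS s ∩ Metric.closedBall x a) ∂μ := by
          apply setLIntegral_congr_fun hXmeas
          intro x hx
          have hsub : Metric.closedBall x a ⊆ V ∩ DS s :=
            Set.subset_inter ((Metric.closedBall_subset_ball haa').trans hx.1)
              (cball_subset_innerSet hx.2)
          beta_reduce
          rw [Set.inter_eq_self_of_subset_right hsub]
          exact (hν_ball x a).symm
      _ ≤ ∫⁻ x, ν (V ∩ DS s ∩ Metric.closedBall x a) ∂μ := setLIntegral_le_lintegral _ _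
      _ = ∫⁻ y in V ∩ DS s, μ (Metric.closedBall y a) ∂ν := (fub μ ν (V ∩ DS s) hWmeas a).symm
      _ ≤ ∫⁻ _ in V ∩ DS s, μ (Metric.closedBall c₀ b) ∂ν := by
          apply setLIntegral_mono' hWmeas
          intro y hy
          exact hkey y c₀ a b hapos.le hab
            (cball_subset_of_innerSet hy.2 hbs)
            ((Metric.closedBall_subset_closedBall hbq).trans hc₀U)
      _ = μ (Metric.closedBall c₀ b) * ν (V ∩ DS s) := setLIntegral_const _ _
  -- (M)
  have hM : ∀ (V : Set G), IsOpen V → ν U * μ (V ∩ U) ≤ ν (V ∩ U) := by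
    intro V hV
    have hA : ∀ t : ℝ, 0 < t → ν (DS t) * μ (V ∩ U) ≤ ν (V ∩ U) := by
      intro t ht
      have hk : ∀ k : ℕ,
          ν (DS t) * μ ({x : G | Metric.ball x (1 / (k + 1 : ℝ)) ⊆ V} ∩ DS (2 / (k + 1 : ℝ)))
            ≤ ν (V ∩ U) := by
        intro k
        set s : ℝ := 1 / (k + 1 : ℝ) with hsdef
        have hspos : 0 < s := by positivity
        set a : ℝ := min s (min t q₀) / 4 with hadef
        have hmin : 0 < min s (min t q₀) := lt_min hspos (lt_min ht hq₀pos)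
        have hapos : 0 < a := by rw [hadef]; positivity
        have has : 4 * a ≤ s := by
          have h := min_le_left s (min t q₀); rw [hadef]; linarith
        have hat : 4 * a ≤ t := by
          have h := (min_le_right s (min t q₀)).trans (min_le_left t q₀)
          rw [hadef]; linarith
        have haq : 4 * a ≤ q₀ := by
          have h := (min_le_right s (min t q₀)).trans (min_le_right t q₀)
          rw [hadef]; linarith
        set X : Set G := {x : G | Metric.ball x s ⊆ V} ∩ DS (s + a) with hXdef
        have hstep : ∀ j : ℕ,
            ν (Metric.closedBall (1 : G) a) * (ν (DS t) * μ X)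
              ≤ ν (Metric.closedBall (1 : G) (a + 2 * a / (j + 1))) * ν (V ∩ DS s) := by
          intro j
          have hjpos : (0 : ℝ) < (j : ℝ) + 1 := by positivity
          have hdpos : 0 < a / ((j : ℝ) + 1) := by positivity
          have hj1 : (1 : ℝ) ≤ (j : ℝ) + 1 := by
            have h0 : (0 : ℝ) ≤ (j : ℝ) := Nat.cast_nonneg j
            linarith
          have hd1 : a / ((j : ℝ) + 1) ≤ a := by
            rw [div_le_iff₀ hjpos]; nlinarith
          have heq2 : 2 * a / ((j : ℝ) + 1) = 2 * (a / ((j : ℝ) + 1)) := by ring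
          set b : ℝ := a + a / ((j : ℝ) + 1) with hbdef
          set b' : ℝ := a + 2 * a / ((j : ℝ) + 1) with hb'def
          have hab : a < b := lt_add_of_pos_right _ hdpos
          have hbb' : b < b' := by rw [hbdef, hb'def, heq2]; linarith
          have hb2a : b ≤ 2 * a := by rw [hbdef]; linarith
          have hb'3a : b' ≤ 3 * a := by rw [hb'def, heq2]; linarith
          have h1 := hIII V hV a s b s hapos (by linarith) hab (by linarith) (by linarith)
          have h2 := hI b b' t (by positivity) hbb' (by linarith) (by linarith)
          calc ν (Metric.closedBall (1 : G) a) * (ν (DS t) * μ X)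
              = ν (DS t) * (ν (Metric.closedBall (1 : G) a) * μ X) := by ring
            _ ≤ ν (DS t) * (μ (Metric.closedBall c₀ b) * ν (V ∩ DS s)) :=
                mul_le_mul_right h1 _
            _ = (μ (Metric.closedBall c₀ b) * ν (DS t)) * ν (V ∩ DS s) := by ring
            _ ≤ ν (Metric.closedBall (1 : G) b') * ν (V ∩ DS s) :=
                mul_le_mul_left h2 _
        -- take the limit in j
        have hanti : Antitone (fun j : ℕ =>
            Metric.closedBall (1 : G) (a + 2 * a / ((j : ℝ) + 1))) := by
          intro j l hjl
          apply Metric.closedBall_subset_closedBall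
          have hc : ((j : ℝ) + 1) ≤ ((l : ℝ) + 1) := by
            have : (j : ℝ) ≤ (l : ℝ) := by exact_mod_cast hjl
            linarith
          have : 2 * a / ((l : ℝ) + 1) ≤ 2 * a / ((j : ℝ) + 1) := by
            apply div_le_div_of_nonneg_left (by linarith) (by positivity) hc
          linarith
        have hiInter : (⋂ j : ℕ, Metric.closedBall (1 : G) (a + 2 * a / ((j : ℝ) + 1)))
            = Metric.closedBall (1 : G) a := by
          apply Set.Subset.antisymm
          · intro z hz
            simp only [Set.mem_iInter, Metric.mem_closedBall] at hz ⊢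
            have htend : Tendsto (fun j : ℕ => a + 2 * a / ((j : ℝ) + 1)) atTop (𝓝 a) := by
              have h0 := tendsto_one_div_add_atTop_nhds_zero_nat (𝕜 := ℝ)
              have h1 : Tendsto (fun j : ℕ => a + 2 * a * (1 / ((j : ℝ) + 1))) atTop
                  (𝓝 (a + 2 * a * 0)) := tendsto_const_nhds.add (h0.const_mul (2 * a))
              simpa [div_eq_mul_inv] using h1
            exact ge_of_tendsto' htend hz
          · intro z hz
            simp only [Set.mem_iInter, Metric.mem_closedBall] at hz ⊢
            intro j
            have : (0 : ℝ) ≤ 2 * a / ((j : ℝ) + 1) := by positivity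
            linarith
        have htm := tendsto_measure_iInter_atTop
          (fun j => measurableSet_closedBall.nullMeasurableSet) hanti
          ⟨0, hnfin _ (by norm_num; linarith)⟩
        rw [hiInter] at htm
        have hlim2 : Tendsto
            (fun j : ℕ => ν (Metric.closedBall (1 : G) (a + 2 * a / ((j : ℝ) + 1)))
              * ν (V ∩ DS s)) atTop
            (𝓝 (ν (Metric.closedBall (1 : G) a) * ν (V ∩ DS s))) :=
          ENNReal.Tendsto.mul_const htm (Or.inl (hnpos a hapos))
        have hle := ge_of_tendsto' hlim2 hstep
        have hcancel : ν (DS t) * μ X ≤ ν (V ∩ DS s) :=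
          (ENNReal.mul_le_mul_iff_right (hnpos a hapos) (hnfin a (by linarith))).mp hle
        have hsub1 : {x : G | Metric.ball x (1 / (k + 1 : ℝ)) ⊆ V} ∩ DS (2 / (k + 1 : ℝ)) ⊆ X := by
          have h2s : (2 : ℝ) / (k + 1 : ℝ) = 2 * s := by rw [hsdef]; ring
          rw [hXdef, h2s]
          exact Set.inter_subset_inter (le_refl _) (innerSet_mono U (by linarith))
        have hsub2 : V ∩ DS s ⊆ V ∩ U :=
          Set.inter_subset_inter_right V (innerSet_subset hspos)
        calc ν (DS t) * μ ({x : G | Metric.ball x (1 / (k + 1 : ℝ)) ⊆ V} ∩ DS (2 / (k + 1 : ℝ)))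
            ≤ ν (DS t) * μ X := mul_le_mul_right (measure_mono hsub1) _
          _ ≤ ν (V ∩ DS s) := hcancel
          _ ≤ ν (V ∩ U) := measure_mono hsub2
      -- union over k
      have hmono : Monotone (fun k : ℕ =>
          {x : G | Metric.ball x (1 / (k + 1 : ℝ)) ⊆ V} ∩ DS (2 / (k + 1 : ℝ))) := by
        intro k l hkl
        have hc : ((k : ℝ) + 1) ≤ ((l : ℝ) + 1) := by
          have : (k : ℝ) ≤ (l : ℝ) := by exact_mod_cast hkl
          linarith
        have h1 : (1 : ℝ) / (l + 1) ≤ 1 / (k + 1) :=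
          div_le_div_of_nonneg_left (by norm_num) (by positivity) hc
        have h2 : (2 : ℝ) / (l + 1) ≤ 2 / (k + 1) :=
          div_le_div_of_nonneg_left (by norm_num) (by positivity) hc
        exact Set.inter_subset_inter (innerSet_mono V h1) (innerSet_mono U h2)
      have hunion : (⋃ k : ℕ, ({x : G | Metric.ball x (1 / (k + 1 : ℝ)) ⊆ V}
          ∩ DS (2 / (k + 1 : ℝ)))) = V ∩ U := by
        apply Set.Subset.antisymm
        · apply Set.iUnion_subset
          intro k
          exact Set.inter_subset_inter (innerSet_subset (by positivity))
            (innerSet_subset (by positivity))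
        · rintro x ⟨hxV, hxU⟩
          obtain ⟨ε, hε, hballV⟩ := Metric.isOpen_iff.mp hV x hxV
          obtain ⟨ε', hε', hballU⟩ := Metric.isOpen_iff.mp hUopen x hxU
          obtain ⟨k, hkk⟩ := exists_nat_one_div_lt
            (show (0 : ℝ) < min ε (ε' / 2) from lt_min hε (by linarith))
          refine Set.mem_iUnion.mpr ⟨k, ⟨?_, ?_⟩⟩
          · exact (Metric.ball_subset_ball (hkk.le.trans (min_le_left _ _))).trans hballV
          · have h1 : (1 : ℝ) / (k + 1) ≤ ε' / 2 := hkk.le.trans (min_le_right _ _)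
            have h2 : (2 : ℝ) / (k + 1) ≤ ε' := by
              have heq : (2 : ℝ) / (k + 1) = 2 * (1 / (k + 1)) := by ring
              rw [heq]; linarith
            exact (Metric.ball_subset_ball h2).trans hballU
      calc ν (DS t) * μ (V ∩ U)
          = ν (DS t) * ⨆ k : ℕ, μ ({x : G | Metric.ball x (1 / (k + 1 : ℝ)) ⊆ V}
              ∩ DS (2 / (k + 1 : ℝ))) := by
            rw [← hunion, hmono.measure_iUnion]
        _ = ⨆ k : ℕ, ν (DS t) * μ ({x : G | Metric.ball x (1 / (k + 1 : ℝ)) ⊆ V}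
              ∩ DS (2 / (k + 1 : ℝ))) := by rw [ENNReal.mul_iSup]
        _ ≤ ν (V ∩ U) := iSup_le hk
    -- t → 0
    have hmonoU : Monotone (fun j : ℕ => DS (1 / (j + 1 : ℝ))) := by
      intro j l hjl
      have hc : ((j : ℝ) + 1) ≤ ((l : ℝ) + 1) := by
        have : (j : ℝ) ≤ (l : ℝ) := by exact_mod_cast hjl
        linarith
      exact innerSet_mono U (div_le_div_of_nonneg_left (by norm_num) (by positivity) hc)
    have hUuni : (⋃ j : ℕ, DS (1 / (j + 1 : ℝ))) = U := innerSet_iUnion hUopen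
    calc ν U * μ (V ∩ U)
        = (⨆ j : ℕ, ν (DS (1 / (j + 1 : ℝ)))) * μ (V ∩ U) := by
          rw [← hUuni, hmonoU.measure_iUnion]
      _ = ⨆ j : ℕ, ν (DS (1 / (j + 1 : ℝ))) * μ (V ∩ U) := by rw [ENNReal.iSup_mul]
      _ ≤ ν (V ∩ U) := iSup_le fun j => hA _ (by positivity)
  -- μ U = 1
  have hμU : μ U = 1 := by
    have h := measure_add_measure_compl (μ := μ) hUopen.measurableSet
    rw [hμsupp, add_zero] at h
    rw [h, measure_univ]
  -- finiteness
  have hνU_ne_top : ν U ≠ ⊤ := by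
    intro htop
    have hball0 : ∀ c : G, μ (Metric.ball c q₀ ∩ U) = 0 := by
      intro c
      have h := hM (Metric.ball c q₀) Metric.isOpen_ball
      rw [htop] at h
      by_contra h0
      rw [ENNReal.top_mul h0] at h
      have h1 : ν (Metric.ball c q₀ ∩ U) ≤ ν (Metric.closedBall (1 : G) q₀) := by
        rw [← hν_ball c q₀]
        exact measure_mono (Set.inter_subset_left.trans Metric.ball_subset_closedBall)
      exact hnfin q₀ le_rfl (top_le_iff.mp (h.trans h1))
    have hcover : U ⊆ ⋃ c ∈ D, (Metric.ball c q₀ ∩ U) := by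
      intro u hu
      obtain ⟨c, hcb, hcD⟩ := Metric.dense_iff.mp hDdense u q₀ hq₀pos
      rw [Metric.mem_ball] at hcb
      exact Set.mem_biUnion hcD ⟨by rw [Metric.mem_ball, dist_comm]; exact hcb, hu⟩
    have h0 : μ U = 0 :=
      measure_mono_null hcover
        ((measure_biUnion_null_iff hDcount).mpr fun c _ => hball0 c)
    rw [hμU] at h0
    exact one_ne_zero h0
  have hνU0 : ν U ≠ 0 := hUopen.measure_ne_zero ν ⟨x₀, hx₀⟩
  refine ⟨hνU_ne_top.lt_top, ?_⟩
  set ρ : Measure G := (ν U)⁻¹ • ν.restrict U with hρdef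
  have hρapply : ∀ A : Set G, MeasurableSet A → ρ A = (ν U)⁻¹ * ν (A ∩ U) := by
    intro A hA
    rw [hρdef, Measure.smul_apply, smul_eq_mul, Measure.restrict_apply hA]
  haveI : IsProbabilityMeasure ρ := ⟨by
    rw [hρapply Set.univ MeasurableSet.univ, Set.univ_inter,
      ENNReal.inv_mul_cancel hνU0 hνU_ne_top]⟩
  have hρopen : ∀ V : Set G, IsOpen V → μ V ≤ ρ V := by
    intro V hV
    have h1 : μ V ≤ μ (V ∩ U) := by
      have h2 : μ (V ∩ Uᶜ) = 0 := measure_mono_null Set.inter_subset_right hμsupp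
      have h3 : μ V ≤ μ (V ∩ U) + μ (V ∩ Uᶜ) := by
        nth_rewrite 1 [← Set.inter_union_compl V U]
        exact measure_union_le _ _
      simpa [h2] using h3
    have h3 := hM V hV
    have h4 : μ (V ∩ U) ≤ (ν U)⁻¹ * ν (V ∩ U) := by
      have h5 := mul_le_mul_right h3 (ν U)⁻¹
      rwa [← mul_assoc, ENNReal.inv_mul_cancel hνU0 hνU_ne_top, one_mul] at h5
    exact h1.trans (h4.trans_eq (hρapply V hV.measurableSet).symm)
  have hle : ∀ A : Set G, μ A ≤ ρ A := by
    intro A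
    by_contra hcon
    push_neg at hcon
    obtain ⟨V, hVA, hVopen, hVlt⟩ := Set.exists_isOpen_lt_of_lt (μ := ρ) A (μ A) hcon
    exact absurd ((measure_mono hVA).trans (hρopen V hVopen)) hVlt.not_ge
  ext A hA
  refine le_antisymm (hle A) ?_
  have h1 : μ Aᶜ ≤ ρ Aᶜ := hle Aᶜ
  rw [prob_compl_eq_one_sub hA, prob_compl_eq_one_sub hA] at h1
  have hρA : ρ A ≤ 1 := prob_le_one
  exact (ENNReal.sub_le_sub_iff_left hρA ENNReal.one_ne_top).mp h1
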